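/- The Kleisli homset Kl(𝒢)([0,1], 1) of the sub-Giry monad, identified with the set of measurable functions from ([0,1], Borel) to ([0,1], Borel) with the pointwise order, is not a directed-complete partial order: the directed family of characteristic functions { χ_X | X Borel, X ⊆ V }, where V ⊆ [0,1] is a non-Borel set, has no least upper bound among measurable functions. -/
import Mathlib


open Set

/-- The Kleisli homset `Kl(𝒢)([0,1], 1)` of the sub-Giry monad, identified with the poset
of Borel-measurable functions `[0,1] → [0,1] ⊆ ℝ` under the pointwise order, is not
directed-complete: for a non-Borel set `V ⊆ [0,1]`, the directed family of indicator
functions `{ χ_X | X Borel, X ⊆ V }` has no least upper bound among measurable functions. -/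
theorem stmt11 (V : Set unitInterval) (hV : ¬ MeasurableSet V) :
    ¬ ∃ h : {f : unitInterval → ℝ // Measurable f},
      IsLUB {f : {f : unitInterval → ℝ // Measurable f} |
        ∃ X : Set unitInterval, MeasurableSet X ∧ X ⊆ V ∧
          f.1 = X.indicator (fun _ => (1 : ℝ))} h := by
  rintro ⟨⟨f, hf⟩, hub, hlb⟩
  -- Step 1: f x ≥ 1 for x ∈ V
  have h1 : ∀ x ∈ V, 1 ≤ f x := by
    intro x hx
    have hmem : (⟨({x} : Set unitInterval).indicator (fun _ => (1:ℝ)),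
        (measurable_const.indicator (measurableSet_singleton x))⟩ :
        {f : unitInterval → ℝ // Measurable f}) ∈
        {f : {f : unitInterval → ℝ // Measurable f} |
          ∃ X : Set unitInterval, MeasurableSet X ∧ X ⊆ V ∧
            f.1 = X.indicator (fun _ => (1 : ℝ))} :=
      ⟨{x}, measurableSet_singleton x, singleton_subset_iff.mpr hx, rfl⟩
    have := hub hmem x
    simpa [indicator_of_mem] using this
  -- Step 2: f y ≤ 0 for y ∉ V
  have h2 : ∀ y ∉ V, f y ≤ 0 := by
    intro y hy
    set g : unitInterval → ℝ := ({y}ᶜ : Set unitInterval).indicator f with hg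
    have hgm : Measurable g := hf.indicator (measurableSet_singleton y).compl
    have hgub : (⟨g, hgm⟩ : {f : unitInterval → ℝ // Measurable f}) ∈
        upperBounds {f : {f : unitInterval → ℝ // Measurable f} |
          ∃ X : Set unitInterval, MeasurableSet X ∧ X ⊆ V ∧
            f.1 = X.indicator (fun _ => (1 : ℝ))} := by
      rintro ⟨φ, hφm⟩ ⟨X, hXm, hXV, hφ⟩
      intro x
      by_cases hxy : x = y
      · subst hxy
        have hxX : x ∉ X := fun hxX => hy (hXV hxX)
        have hφ' : φ = X.indicator (fun _ => (1:ℝ)) := hφ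
        have : φ x = 0 := by rw [hφ']; exact indicator_of_notMem hxX _
        simp [this, hg, indicator_of_notMem, Set.mem_compl_iff]
      · have hle := hub ⟨X, hXm, hXV, hφ⟩ x
        have : g x = f x := indicator_of_mem (by simp [hxy]) f
        simpa [this] using hle
    have := hlb hgub y
    simpa [hg, indicator_of_notMem, Set.mem_compl_iff] using this
  -- Step 3: V = f ⁻¹' Ici 1
  apply hV
  have : V = f ⁻¹' (Ici 1) := by
    ext x
    constructor
    · intro hx; exact h1 x hx
    · intro hx
      by_contra hxV
      have := h2 x hxV
      have h01 : (1:ℝ) ≤ f x := hx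
      linarith
  rw [this]
  exact hf measurableSet_Ici
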